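/- arXiv:1609.01907 — 2 statements merged into one kernel-verified Lean document; each statement's English description precedes it below -/
import Mathlib

section
/- Let X be a geodesic δ-hyperbolic metric space (δ > 0) with the property that any continuous path between the endpoints of a geodesic that avoids a ball B(z,r) centred at a point z of that geodesic has length at least 2^{(r-1)/δ}. Suppose a continuous path c from b to b' avoids the larger ball B(z, 2r) for some point z on a geodesic [b,b'], where r ≥ 1. Then the image of c cannot be covered by fewer than 2^{(r-1)/δ}/(2r) balls of radius r. -/
open Set Metric

/-- `g` parametrizes a geodesic segment from `b` to `c` (by arclength on
`[0, d(b,c)]`). -/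
def IsGeodesicSeg {X : Type*} [MetricSpace X] (g : ℝ → X) (b c : X) : Prop :=
  g 0 = b ∧ g (dist b c) = c ∧
    ∀ u ∈ Icc 0 (dist b c), ∀ v ∈ Icc 0 (dist b c), dist (g u) (g v) = |u - v|

/-- in a geodesic `δ`-hyperbolic space in which any continuous path
between the endpoints of a geodesic avoiding a ball `B(z,r)` centred at a point
`z` of that geodesic has length at least `2^((r-1)/δ)`, if a continuous path `c`
from `b` to `b'` avoids the larger ball `B(z, 2r)` for a point `z` on a geodesic
`[b,b']` (with `r ≥ 1`), then the image of `c` cannot be covered by fewer than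
`2^((r-1)/δ)/(2r)` balls of radius `r`. -/
theorem covering_number_lower_bound {X : Type*} [MetricSpace X] (δ : ℝ) (hδ : 0 < δ)
    (r : ℝ) (hr : 1 ≤ r)
    (hgeod : ∀ b c : X, ∃ g : ℝ → X, IsGeodesicSeg g b c)
    (havoidlen : ∀ (b c : X) (g : ℝ → X), IsGeodesicSeg g b c →
      ∀ z ∈ g '' Icc 0 (dist b c), ∀ γ : ℝ → X, ContinuousOn γ (Icc 0 1) →
      γ 0 = b → γ 1 = c → (∀ t ∈ Icc (0:ℝ) 1, γ t ∉ ball z r) →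
      ENNReal.ofReal (2 ^ ((r - 1) / δ)) ≤ eVariationOn γ (Icc 0 1))
    (b b' : X) (g : ℝ → X) (hg : IsGeodesicSeg g b b')
    (z : X) (hz : z ∈ g '' Icc 0 (dist b b'))
    (c : ℝ → X) (hccont : ContinuousOn c (Icc 0 1)) (hc0 : c 0 = b) (hc1 : c 1 = b')
    (havoid : ∀ t ∈ Icc (0:ℝ) 1, c t ∉ ball z (2 * r))
    (N : ℕ) (x : Fin N → X) (hcover : c '' Icc 0 1 ⊆ ⋃ i, ball (x i) r) :
    2 ^ ((r - 1) / δ) / (2 * r) ≤ (N : ℝ) := by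
  classical
  have hr0 : (0:ℝ) < r := lt_of_lt_of_le one_pos hr
  have h2r : (0:ℝ) < 2 * r := by linarith
  -- N ≠ 0
  have hmem0 : c 0 ∈ c '' Icc 0 1 := ⟨0, ⟨le_refl 0, zero_le_one⟩, rfl⟩
  have hNpos : 0 < N := by
    rcases Nat.eq_zero_or_pos N with h | h
    · subst h
      have := hcover hmem0
      simp at this
    · exact h
  have hFinNe : Nonempty (Fin N) := ⟨⟨0, hNpos⟩⟩
  -- choice of a covering ball index for each time
  have hJex : ∀ u : ℝ, ∃ i : Fin N, u ∈ Icc (0:ℝ) 1 → c u ∈ ball (x i) r := by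
    intro u
    by_cases hu : u ∈ Icc (0:ℝ) 1
    · obtain ⟨i, hi⟩ := mem_iUnion.1 (hcover ⟨u, hu, rfl⟩)
      exact ⟨i, fun _ => hi⟩
    · exact ⟨Classical.arbitrary _, fun h => absurd h hu⟩
  choose J hJ using hJex
  set S : ℝ → Set ℝ := fun u => {s | s ∈ Icc u 1 ∧ c s ∈ ball (x (J u)) r} with hSdef
  set F : ℝ → ℝ := fun u => sSup (S u) with hFdef
  have hmemS : ∀ u ∈ Icc (0:ℝ) 1, u ∈ S u := fun u hu => ⟨⟨le_refl u, hu.2⟩, hJ u hu⟩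
  have hSsub : ∀ u ∈ Icc (0:ℝ) 1, S u ⊆ Icc 0 1 :=
    fun u hu s hs => ⟨le_trans hu.1 hs.1.1, hs.1.2⟩
  have hbdd : ∀ u, BddAbove (S u) :=
    fun u => BddAbove.mono (fun s hs => hs.1.2) bddAbove_Iic
  have hle : ∀ u ∈ Icc (0:ℝ) 1, u ≤ F u := fun u hu => le_csSup (hbdd u) (hmemS u hu)
  have hFle1 : ∀ u ∈ Icc (0:ℝ) 1, F u ≤ 1 :=
    fun u hu => csSup_le ⟨u, hmemS u hu⟩ (fun s hs => hs.1.2)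
  have hFmem : ∀ u ∈ Icc (0:ℝ) 1, F u ∈ Icc (0:ℝ) 1 :=
    fun u hu => ⟨le_trans hu.1 (hle u hu), hFle1 u hu⟩
  -- fresh point lemma: strictly beyond any point of the ball before time 1
  have hfresh : ∀ u ∈ Icc (0:ℝ) 1, ∀ a ∈ Icc (0:ℝ) 1, u ≤ a → a < 1 →
      c a ∈ ball (x (J u)) r → a < F u := by
    intro u hu a ha hua ha1 hball
    have hV : c ⁻¹' (ball (x (J u)) r) ∈ nhdsWithin a (Icc (0:ℝ) 1) :=
      (hccont a ha) (isOpen_ball.mem_nhds hball)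
    have hsub : Ioc a 1 ⊆ Icc (0:ℝ) 1 := fun s hs => ⟨le_trans ha.1 (le_of_lt hs.1), hs.2⟩
    have hV2 : c ⁻¹' (ball (x (J u)) r) ∈ nhdsWithin a (Ioc a 1) :=
      nhdsWithin_mono a hsub hV
    have hne : (nhdsWithin a (Ioc a 1)).NeBot := by
      refine mem_closure_iff_nhdsWithin_neBot.1 ?_
      rw [closure_Ioc (ne_of_lt ha1)]
      exact ⟨le_refl a, le_of_lt ha1⟩
    obtain ⟨s, hsV, hsI⟩ := Filter.nonempty_of_mem (Filter.inter_mem hV2 self_mem_nhdsWithin)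
    have hsS : s ∈ S u := ⟨⟨le_trans hua (le_of_lt hsI.1), hsI.2⟩, hsV⟩
    exact lt_of_lt_of_le hsI.1 (le_csSup (hbdd u) hsS)
  -- consequences of hfresh
  have hstrict : ∀ u ∈ Icc (0:ℝ) 1, u < 1 → u < F u :=
    fun u hu h1 => hfresh u hu u hu (le_refl u) h1 (hJ u hu)
  have hbound : ∀ u ∈ Icc (0:ℝ) 1, F u < 1 → c (F u) ∉ ball (x (J u)) r := by
    intro u hu hF1 hball
    exact absurd (hfresh u hu (F u) (hFmem u hu) (hle u hu) hF1 hball) (lt_irrefl _)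
  have hbeyond : ∀ u ∈ Icc (0:ℝ) 1, ∀ s ∈ Icc (0:ℝ) 1, F u < s →
      c s ∉ ball (x (J u)) r := by
    intro u hu s hs hFs hball
    have hsS : s ∈ S u := ⟨⟨le_trans (hle u hu) (le_of_lt hFs), hs.2⟩, hball⟩
    exact absurd (le_csSup (hbdd u) hsS) (not_le_of_gt hFs)
  -- c (F u) lies in the closed ball
  have hFcb : ∀ u ∈ Icc (0:ℝ) 1, c (F u) ∈ closedBall (x (J u)) r := by
    intro u hu
    have hcl : F u ∈ closure (S u) :=
      (isLUB_csSup ⟨u, hmemS u hu⟩ (hbdd u)).mem_closure ⟨u, hmemS u hu⟩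
    have hcw : ContinuousWithinAt c (S u) (F u) :=
      (hccont (F u) (hFmem u hu)).mono (hSsub u hu)
    have himg : c (F u) ∈ closure (c '' S u) := hcw.mem_closure_image hcl
    refine (IsClosed.closure_subset_iff isClosed_closedBall).2 ?_ himg
    rintro _ ⟨s, hs, rfl⟩
    exact le_of_lt (mem_ball.1 hs.2)
  -- the iterated sequence of times
  set T : ℕ → ℝ := fun n => F^[n] 0 with hTdef
  have hT0 : T 0 = 0 := rfl
  have hTsucc : ∀ n, T (n + 1) = F (T n) := by
    intro n
    simp [hTdef, Function.iterate_succ_apply']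
  have hTmem : ∀ n, T n ∈ Icc (0:ℝ) 1 := by
    intro n
    induction n with
    | zero => exact ⟨le_refl 0, zero_le_one⟩
    | succ n ih => rw [hTsucc]; exact hFmem _ ih
  have hTstep : ∀ n, T n ≤ T (n + 1) := fun n => (hTsucc n) ▸ hle _ (hTmem n)
  have hTmono : Monotone T := monotone_nat_of_le_succ hTstep
  -- termination : T N = 1
  have hT1 : T N = 1 := by
    by_contra hne
    have hTN : T N < 1 := lt_of_le_of_ne (hTmem N).2 hne
    have hTi : ∀ i, i ≤ N → T i < 1 := fun i hi => lt_of_le_of_lt (hTmono hi) hTN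
    have key : ∀ i i' : ℕ, i < i' → i' ≤ N → J (T i') ≠ J (T i) := by
      intro i i' hii hi'N heq
      have hball' : c (T i') ∈ ball (x (J (T i))) r := heq ▸ hJ _ (hTmem i')
      have hFTi : F (T i) ≤ T i' := (hTsucc i) ▸ hTmono hii
      rcases eq_or_lt_of_le hFTi with heq2 | hlt2
      · have : F (T i) < 1 := heq2 ▸ hTi i' hi'N
        exact hbound (T i) (hTmem i) this (heq2 ▸ hball')
      · exact hbeyond (T i) (hTmem i) (T i') (hTmem i') hlt2 hball'
    have hinj : Function.Injective (fun i : Fin (N + 1) => J (T i.1)) := by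
      intro i i' hii
      by_contra hne'
      dsimp at hii
      rcases lt_or_gt_of_ne (fun h : (i:ℕ) = (i':ℕ) => hne' (Fin.ext h)) with hlt | hlt
      · exact key i.1 i'.1 hlt (Nat.lt_succ_iff.1 i'.2) hii.symm
      · exact key i'.1 i.1 hlt (Nat.lt_succ_iff.1 i.2) hii
    have := Fintype.card_le_of_injective _ hinj
    simp at this
  -- the chain of points and geodesics between them
  set q : ℕ → X := fun m => c (T m) with hqdef
  set d : ℕ → ℝ := fun m => dist (q m) (q (m + 1)) with hddef
  have hd0 : ∀ m, 0 ≤ d m := fun m => dist_nonneg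
  have hd2r : ∀ m, d m < 2 * r := by
    intro m
    have h1 : dist (q m) (x (J (T m))) < r := mem_ball.1 (hJ _ (hTmem m))
    have h2 : dist (q (m + 1)) (x (J (T m))) ≤ r := by
      have := hFcb (T m) (hTmem m)
      rw [← hTsucc m] at this
      exact mem_closedBall.1 this
    calc d m ≤ dist (q m) (x (J (T m))) + dist (q (m + 1)) (x (J (T m))) :=
          dist_triangle_right _ _ _
      _ < 2 * r := by linarith
  have hqz : ∀ m, 2 * r ≤ dist (q m) z := by
    intro m
    have := havoid (T m) (hTmem m)
    simpa [mem_ball, not_lt] using this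
  choose G hG using fun m => hgeod (q m) (q (m + 1))
  have hG1 : ∀ m, G m 0 = q m := fun m => (hG m).1
  have hG2 : ∀ m, G m (d m) = q (m + 1) := fun m => (hG m).2.1
  have hG3 : ∀ m, ∀ u ∈ Icc 0 (d m), ∀ v ∈ Icc 0 (d m),
      dist (G m u) (G m v) = |u - v| := fun m => (hG m).2.2
  -- the piecewise geodesic path
  set Γ : ℝ → X := fun u => G ⌊u⌋₊ (d ⌊u⌋₊ * (u - (⌊u⌋₊ : ℝ))) with hΓdef
  have hΓnat : ∀ m : ℕ, Γ (m : ℝ) = q m := by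
    intro m
    simp only [hΓdef, Nat.floor_natCast, sub_self, mul_zero, hG1]
  have hL1 : ∀ (m : ℕ) (u : ℝ), (m : ℝ) ≤ u → u ≤ (m : ℝ) + 1 →
      Γ u = G m (d m * (u - m)) := by
    intro m u hmu hum
    rcases eq_or_lt_of_le hum with heq | hlt
    · have h1 : Γ u = q (m + 1) := by
        have : u = ((m + 1 : ℕ) : ℝ) := by push_cast; linarith
        rw [this, hΓnat]
      have h2 : G m (d m * (u - m)) = q (m + 1) := by
        have : d m * (u - m) = d m := by
          have : u - (m : ℝ) = 1 := by linarith
          rw [this, mul_one]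
        rw [this, hG2]
      rw [h1, h2]
    · have hfl : ⌊u⌋₊ = m := by
        rw [Nat.floor_eq_iff (le_trans (Nat.cast_nonneg m) hmu)]
        exact ⟨hmu, by push_cast; linarith⟩
      simp only [hΓdef, hfl]
  have hparam : ∀ (m : ℕ) (u : ℝ), (m : ℝ) ≤ u → u ≤ (m : ℝ) + 1 →
      d m * (u - m) ∈ Icc 0 (d m) := by
    intro m u hmu hum
    constructor
    · exact mul_nonneg (hd0 m) (by linarith)
    · nlinarith [hd0 m]
  -- distance bound within a piece
  have hL2 : ∀ (m : ℕ) (u v : ℝ), (m : ℝ) ≤ u → u ≤ v → v ≤ (m : ℝ) + 1 →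
      dist (Γ u) (Γ v) ≤ 2 * r * (v - u) := by
    intro m u v hmu huv hvm
    rw [hL1 m u hmu (le_trans huv hvm), hL1 m v (le_trans hmu huv) hvm]
    rw [hG3 m _ (hparam m u hmu (le_trans huv hvm)) _ (hparam m v (le_trans hmu huv) hvm)]
    have : |d m * (u - m) - d m * (v - m)| = d m * (v - u) := by
      rw [abs_of_nonpos (by nlinarith [hd0 m])]
      ring
    rw [this]
    nlinarith [hd0 m, hd2r m]
  -- global distance bound
  have hL3 : ∀ (n : ℕ) (u v : ℝ), 0 ≤ u → u ≤ v → v ≤ (n : ℝ) →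
      dist (Γ u) (Γ v) ≤ 2 * r * (v - u) := by
    intro n
    induction n with
    | zero =>
      intro u v hu huv hv
      have h1 : u = 0 := le_antisymm (le_trans huv (by exact_mod_cast hv)) hu
      have h2 : v = 0 := le_antisymm (by exact_mod_cast hv) (le_trans hu huv)
      subst h1; subst h2
      simp
    | succ n ih =>
      intro u v hu huv hv
      by_cases hvn : v ≤ (n : ℝ)
      · exact ih u v hu huv hvn
      · push_neg at hvn
        by_cases hun : (n : ℝ) ≤ u
        · exact hL2 n u v hun huv (by push_cast at hv ⊢; linarith)
        · push_neg at hun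
          calc dist (Γ u) (Γ v) ≤ dist (Γ u) (Γ (n : ℝ)) + dist (Γ (n : ℝ)) (Γ v) :=
                dist_triangle _ _ _
            _ ≤ 2 * r * ((n : ℝ) - u) + 2 * r * (v - (n : ℝ)) := by
                have h1 := ih u (n : ℝ) hu (le_of_lt hun) (le_refl _)
                have h2 := hL2 n (n : ℝ) v (le_refl _) (le_of_lt hvn)
                  (by push_cast at hv ⊢; linarith)
                linarith
            _ = 2 * r * (v - u) := by ring
  -- avoidance
  have hL4 : ∀ u : ℝ, 0 ≤ u → r ≤ dist (Γ u) z := by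
    intro u hu
    set m := ⌊u⌋₊ with hm
    have hmu : (m : ℝ) ≤ u := Nat.floor_le hu
    have hum : u < (m : ℝ) + 1 := Nat.lt_floor_add_one u
    set s := d m * (u - (m : ℝ)) with hs
    have hsIcc : s ∈ Icc 0 (d m) := hparam m u hmu (le_of_lt hum)
    have hΓu : Γ u = G m s := rfl
    have h1 : dist (Γ u) (q m) = s := by
      rw [hΓu, ← hG1 m, hG3 m s hsIcc 0 ⟨le_refl 0, hd0 m⟩]
      rw [sub_zero, abs_of_nonneg hsIcc.1]
    have h2 : dist (Γ u) (q (m + 1)) = d m - s := by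
      rw [hΓu, ← hG2 m, hG3 m s hsIcc (d m) ⟨hd0 m, le_refl _⟩]
      rw [abs_of_nonpos (by linarith [hsIcc.2])]
      ring
    have t1 : dist (q m) z ≤ dist (q m) (Γ u) + dist (Γ u) z := dist_triangle _ _ _
    have t2 : dist (q (m + 1)) z ≤ dist (q (m + 1)) (Γ u) + dist (Γ u) z := dist_triangle _ _ _
    rw [dist_comm (q m) (Γ u)] at t1
    rw [dist_comm (q (m + 1)) (Γ u)] at t2
    have := hqz m
    have := hqz (m + 1)
    have := hd2r m
    linarith
  -- the final path
  set γ : ℝ → X := fun t => Γ ((N : ℝ) * t) with hγdef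
  have hγ0 : γ 0 = b := by
    have : γ 0 = Γ ((0 : ℕ) : ℝ) := by simp [hγdef]
    rw [this, hΓnat, hqdef]
    simp only [hT0]
    exact hc0
  have hγ1 : γ 1 = b' := by
    have : γ 1 = Γ ((N : ℕ) : ℝ) := by simp [hγdef]
    rw [this, hΓnat, hqdef]
    simp only [hT1]
    exact hc1
  have hγavoid : ∀ t ∈ Icc (0:ℝ) 1, γ t ∉ ball z r := by
    intro t ht
    have : r ≤ dist (γ t) z := hL4 _ (mul_nonneg (Nat.cast_nonneg N) ht.1)
    simp [mem_ball, not_lt, this]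
  have hγlip : LipschitzOnWith (Real.toNNReal (2 * r * N)) γ (Icc 0 1) := by
    apply LipschitzOnWith.of_dist_le'
    intro s hs t ht
    rcases le_total s t with hst | hst
    · have h1 : dist (γ s) (γ t) ≤ 2 * r * ((N : ℝ) * t - (N : ℝ) * s) := by
        apply hL3 N _ _ (mul_nonneg (Nat.cast_nonneg N) hs.1)
          (by nlinarith [Nat.cast_nonneg (α := ℝ) N])
        nlinarith [Nat.cast_nonneg (α := ℝ) N, ht.2]
      rw [Real.dist_eq, abs_of_nonpos (by linarith)]
      nlinarith
    · have h1 : dist (γ t) (γ s) ≤ 2 * r * ((N : ℝ) * s - (N : ℝ) * t) := by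
        apply hL3 N _ _ (mul_nonneg (Nat.cast_nonneg N) ht.1)
          (by nlinarith [Nat.cast_nonneg (α := ℝ) N])
        nlinarith [Nat.cast_nonneg (α := ℝ) N, hs.2]
      rw [dist_comm (γ s) (γ t), Real.dist_eq, abs_of_nonneg (by linarith)]
      nlinarith
  have hγcont : ContinuousOn γ (Icc 0 1) := hγlip.continuousOn
  -- variation bound
  have hvar : eVariationOn γ (Icc (0:ℝ) 1) ≤ ENNReal.ofReal (2 * r * N) := by
    have hid : eVariationOn (fun y : ℝ => y) (Icc (0:ℝ) 1) ≤ ENNReal.ofReal 1 := by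
      have hmono : MonotoneOn (fun y : ℝ => y) (Icc (0:ℝ) 1) := fun a _ b _ hab => hab
      have := hmono.eVariationOn_le (a := 0) (b := 1)
        ⟨le_refl 0, zero_le_one⟩ ⟨zero_le_one, le_refl 1⟩
      simpa using this
    have hcomp : eVariationOn (γ ∘ (fun y : ℝ => y)) (Icc (0:ℝ) 1) ≤
        (Real.toNNReal (2 * r * N) : ENNReal) * eVariationOn (fun y : ℝ => y) (Icc (0:ℝ) 1) :=
      hγlip.comp_eVariationOn_le (fun a ha => ha)
    have heq : (γ ∘ (fun y : ℝ => y)) = γ := rfl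
    rw [heq] at hcomp
    calc eVariationOn γ (Icc (0:ℝ) 1) ≤
        (Real.toNNReal (2 * r * N) : ENNReal) * eVariationOn (fun y : ℝ => y) (Icc (0:ℝ) 1) :=
          hcomp
      _ ≤ (Real.toNNReal (2 * r * N) : ENNReal) * ENNReal.ofReal 1 := by
          exact mul_le_mul_right hid _
      _ = ENNReal.ofReal (2 * r * N) := by
          rw [ENNReal.ofReal_one, mul_one]
          rfl
  -- conclude
  have hkey := havoidlen b b' g hg z hz γ hγcont hγ0 hγ1 hγavoid
  have hchain : ENNReal.ofReal (2 ^ ((r - 1) / δ)) ≤ ENNReal.ofReal (2 * r * N) :=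
    le_trans hkey hvar
  have hreal : (2 : ℝ) ^ ((r - 1) / δ) ≤ 2 * r * N := by
    have h2 : (0:ℝ) ≤ 2 * r * N := by positivity
    exact (ENNReal.ofReal_le_ofReal_iff h2).1 hchain
  rw [div_le_iff₀ h2r]
  linarith
end

section
/- Let f_n : [0,1] → M_n be continuous maps into metric spaces (M_n, d_n, base point f_n(0)), and let e : [0,1] → ℝ code a pseudometric d_e with quotient metric space T_e pointed at the class of 0. If sup_{s,t ∈ [0,1]} |d_n(f_n(s), f_n(t)) - d_e(s,t)| → 0 as n → ∞, then the pointed compact metric spaces (image of f_n, d_n, f_n(0)) converge to (T_e, d_e, class of 0) in the pointed Gromov–Hausdorff topology. -/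
open Set Filter

/-- The excursion pseudometric `d_e(s,t) = e s + e t - 2 inf_{u between s,t} e u`. -/
noncomputable def excDist (e : ℝ → ℝ) (s t : ℝ) : ℝ :=
  e s + e t - 2 * sInf (e '' Set.uIcc s t)

/-- `R` is a correspondence between `X` and `Y`. -/
def IsCorrespondence {X Y : Type*} (R : Set (X × Y)) : Prop :=
  (∀ a : X, ∃ b : Y, (a, b) ∈ R) ∧ (∀ b : Y, ∃ a : X, (a, b) ∈ R)

/-- The distortion of a relation `R ⊆ X × Y`. -/
noncomputable def corrDistortion {X Y : Type*} [MetricSpace X] [MetricSpace Y]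
    (R : Set (X × Y)) : ℝ :=
  sSup {v | ∃ p ∈ R, ∃ q ∈ R, v = |dist p.1 q.1 - dist p.2 q.2|}

/-- The pointed Gromov–Hausdorff distance, via correspondences matching the
base points. -/
noncomputable def pointedGHDist {X Y : Type*} [MetricSpace X] [MetricSpace Y]
    (x : X) (y : Y) : ℝ :=
  (1 / 2) * sInf {d | ∃ R : Set (X × Y), IsCorrespondence R ∧ (x, y) ∈ R ∧
    d = corrDistortion R}

lemma corrDistortion_nonneg {X Y : Type*} [MetricSpace X] [MetricSpace Y]
    (R : Set (X × Y)) : 0 ≤ corrDistortion R := by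
  apply Real.sSup_nonneg
  rintro v ⟨a, -, b, -, rfl⟩
  exact abs_nonneg _

/-- if the distance functions along paths `f n` converge
uniformly to the excursion pseudometric `d_e`, then the pointed ranges
`(f n '' [0,1], d_n, f n 0)` converge in the pointed Gromov–Hausdorff topology
to the quotient metric tree `T_e = [0,1]/{d_e = 0}` (given here as any metric
space `T` together with a surjective projection `p` realizing `d_e`, pointed at
`p 0`). -/
theorem range_converges_to_tree
    (e : ℝ → ℝ) (he_cont : ContinuousOn e (Icc 0 1))
    (he0 : e 0 = 0) (he1 : e 1 = 0) (he_nonneg : ∀ u ∈ Icc (0:ℝ) 1, 0 ≤ e u)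
    (M : ℕ → Type*) [∀ n, MetricSpace (M n)]
    (f : ∀ n, ℝ → M n) (hf : ∀ n, ContinuousOn (f n) (Icc 0 1))
    (T : Type*) [MetricSpace T] (p : ℝ → T)
    (hp_surj : ∀ x : T, ∃ s ∈ Icc (0:ℝ) 1, p s = x)
    (hp_dist : ∀ s ∈ Icc (0:ℝ) 1, ∀ t ∈ Icc (0:ℝ) 1, dist (p s) (p t) = excDist e s t)
    (hconv : Tendsto
      (fun n => sSup {v | ∃ s ∈ Icc (0:ℝ) 1, ∃ t ∈ Icc (0:ℝ) 1,
        v = |dist (f n s) (f n t) - excDist e s t|}) atTop (nhds 0)) :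
    Tendsto (fun n => pointedGHDist
        (⟨f n 0, Set.mem_image_of_mem _ (by norm_num : (0:ℝ) ∈ Icc (0:ℝ) 1)⟩ :
          ↥(f n '' Icc 0 1))
        (p 0)) atTop (nhds 0) := by
  have h0 : (0:ℝ) ∈ Icc (0:ℝ) 1 := by norm_num
  set S : ℕ → ℝ := fun n => sSup {v | ∃ s ∈ Icc (0:ℝ) 1, ∃ t ∈ Icc (0:ℝ) 1,
        v = |dist (f n s) (f n t) - excDist e s t|} with hS
  have hge : ∀ n, 0 ≤ pointedGHDist
      (⟨f n 0, Set.mem_image_of_mem _ (by norm_num : (0:ℝ) ∈ Icc (0:ℝ) 1)⟩ :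
        ↥(f n '' Icc 0 1)) (p 0) := by
    intro n
    unfold pointedGHDist
    apply mul_nonneg (by norm_num)
    apply Real.sInf_nonneg
    rintro d ⟨R, -, -, rfl⟩
    exact corrDistortion_nonneg R
  have hle : ∀ n, pointedGHDist
      (⟨f n 0, Set.mem_image_of_mem _ (by norm_num : (0:ℝ) ∈ Icc (0:ℝ) 1)⟩ :
        ↥(f n '' Icc 0 1)) (p 0) ≤ (1/2) * S n := by
    intro n
    set R : Set (↥(f n '' Icc 0 1) × T) :=
      {q | ∃ s ∈ Icc (0:ℝ) 1, (q.1 : M n) = f n s ∧ q.2 = p s} with hR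
    have hcorr : IsCorrespondence R := by
      constructor
      · rintro ⟨a, s, hs, rfl⟩
        exact ⟨p s, s, hs, rfl, rfl⟩
      · intro b
        obtain ⟨s, hs, rfl⟩ := hp_surj b
        exact ⟨⟨f n s, Set.mem_image_of_mem _ hs⟩, s, hs, rfl, rfl⟩
    have hmem : ((⟨f n 0, Set.mem_image_of_mem _ (by norm_num : (0:ℝ) ∈ Icc (0:ℝ) 1)⟩ :
        ↥(f n '' Icc 0 1)), p 0) ∈ R := ⟨0, h0, rfl, rfl⟩
    have hdisto : corrDistortion R = S n := by
      unfold corrDistortion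
      rw [hS]
      congr 1
      ext v
      constructor
      · rintro ⟨a, ⟨s, hs, ha1, ha2⟩, b, ⟨t, ht, hb1, hb2⟩, rfl⟩
        refine ⟨s, hs, t, ht, ?_⟩
        rw [Subtype.dist_eq, ha1, hb1, ha2, hb2, hp_dist s hs t ht]
      · rintro ⟨s, hs, t, ht, rfl⟩
        refine ⟨(⟨f n s, Set.mem_image_of_mem _ hs⟩, p s), ⟨s, hs, rfl, rfl⟩,
          (⟨f n t, Set.mem_image_of_mem _ ht⟩, p t), ⟨t, ht, rfl, rfl⟩, ?_⟩
        rw [Subtype.dist_eq, hp_dist s hs t ht]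
    unfold pointedGHDist
    have hinf : sInf {d | ∃ R' : Set (↥(f n '' Icc 0 1) × T), IsCorrespondence R' ∧
        ((⟨f n 0, Set.mem_image_of_mem _ (by norm_num : (0:ℝ) ∈ Icc (0:ℝ) 1)⟩ :
          ↥(f n '' Icc 0 1)), p 0) ∈ R' ∧ d = corrDistortion R'} ≤ S n := by
      apply csInf_le
      · refine ⟨0, ?_⟩
        rintro d ⟨R', -, -, rfl⟩
        exact corrDistortion_nonneg R'
      · exact ⟨R, hcorr, hmem, hdisto.symm⟩
    linarith
  have hlim : Tendsto (fun n => (1/2 : ℝ) * S n) atTop (nhds 0) := by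
    have := hconv.const_mul (1/2 : ℝ)
    simpa [hS] using this
  exact squeeze_zero hge hle hlim
end
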